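/- Define θ_k ∈ (0,1) recursively by Gθ_k²/η_k = (1-θ_k)·A_k and A_{k+1} = (1-θ_k)·A_k, with A₀ = A > 0, G > 0, η_k > 0. Then for all T ≥ 1: 1/(1 + √(A/G)·∑_{k=0}^{T-1}√η_k)² ≤ ∏_{k=0}^{T-1}(1-θ_k) ≤ 1/(1 + (√(A/G)/2)·∑_{k=0}^{T-1}√η_k)². -/

import Mathlib

set_option maxHeartbeats 1600000


theorem guler_product_bound (a G : ℝ) (ha : 0 < a) (hG : 0 < G)
    (η θ A : ℕ → ℝ) (hη : ∀ k, 0 < η k) (hA0 : A 0 = a)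
    (hθ : ∀ k, θ k ∈ Set.Ioo (0 : ℝ) 1)
    (hrec : ∀ k, G * θ k ^ 2 / η k = (1 - θ k) * A k)
    (hA : ∀ k, A (k + 1) = (1 - θ k) * A k)
    (T : ℕ) (hT : 1 ≤ T) :
    1 / (1 + Real.sqrt (a / G) * ∑ k ∈ Finset.range T, Real.sqrt (η k)) ^ 2
        ≤ ∏ k ∈ Finset.range T, (1 - θ k) ∧
      ∏ k ∈ Finset.range T, (1 - θ k)
        ≤ 1 / (1 + Real.sqrt (a / G) / 2 * ∑ k ∈ Finset.range T, Real.sqrt (η k)) ^ 2 := by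
  have hApos : ∀ k, 0 < A k := by
    intro k
    induction k with
    | zero => rw [hA0]; exact ha
    | succ n ih =>
      rw [hA n]
      exact mul_pos (by linarith [(hθ n).2]) ih
  -- step bounds on b k = sqrt (a / A k)
  have step : ∀ k,
      Real.sqrt (a / G) / 2 * Real.sqrt (η k)
        ≤ Real.sqrt (a / A (k + 1)) - Real.sqrt (a / A k) ∧
      Real.sqrt (a / A (k + 1)) - Real.sqrt (a / A k)
        ≤ Real.sqrt (a / G) * Real.sqrt (η k) := by
    intro k
    set x := A k with hx
    set y := A (k + 1) with hy
    have hxpos : 0 < x := hApos k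
    have hypos : 0 < y := hApos (k + 1)
    set sx := Real.sqrt x with hsx
    set sy := Real.sqrt y with hsy
    set sa := Real.sqrt a with hsa
    set c := Real.sqrt (a / G) * Real.sqrt (η k) with hc
    have hsxpos : 0 < sx := Real.sqrt_pos.mpr hxpos
    have hsypos : 0 < sy := Real.sqrt_pos.mpr hypos
    have hsapos : 0 < sa := Real.sqrt_pos.mpr ha
    have hsx2 : sx ^ 2 = x := Real.sq_sqrt hxpos.le
    have hsy2 : sy ^ 2 = y := Real.sq_sqrt hypos.le
    have hsa2 : sa ^ 2 = a := Real.sq_sqrt ha.le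
    have hcpos : 0 < c := mul_pos (Real.sqrt_pos.mpr (div_pos ha hG))
      (Real.sqrt_pos.mpr (hη k))
    have hc2 : c ^ 2 = a / G * η k := by
      rw [hc, mul_pow, Real.sq_sqrt (div_pos ha hG).le, Real.sq_sqrt (hη k).le]
    -- key algebraic relation : a * (x - y)^2 = c^2 * y * x^2
    have hθ2 : θ k ^ 2 = η k * y / G := by
      have h := hrec k
      have hηk := hη k
      have : y = (1 - θ k) * x := hA k
      field_simp at h ⊢
      nlinarith [h]
    have hxy : x - y = θ k * x := by
      have := hA k; rw [← hy] at this; linarith [this]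
    have hkey : a * (x - y) ^ 2 = c ^ 2 * y * x ^ 2 := by
      rw [hxy, hc2, mul_pow, hθ2]
      field_simp
    have hsxy : sy ≤ sx := by
      apply Real.sqrt_le_sqrt
      nlinarith [hxy, (hθ k).1, hxpos]
    have hdiff : Real.sqrt (a / y) - Real.sqrt (a / x) = sa / sy - sa / sx := by
      rw [Real.sqrt_div ha.le, Real.sqrt_div ha.le]
    rw [hdiff]
    have hxy2 : (sx - sy) * (sx + sy) = x - y := by nlinarith [hsx2, hsy2]
    -- a * (sx - sy)^2 * (sx + sy)^2 = c^2 * sy^2 * sx^4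
    have hkey2 : sa ^ 2 * ((sx - sy) * (sx + sy)) ^ 2 = c ^ 2 * sy ^ 2 * (sx ^ 2) ^ 2 := by
      rw [hxy2, hsa2, hsy2, hsx2]; exact hkey
    have sqle : ∀ u v : ℝ, 0 ≤ u → 0 ≤ v → u ^ 2 ≤ v ^ 2 → u ≤ v := by
      intro u v hu hv h
      nlinarith
    have hu0 : 0 ≤ sa * (sx - sy) := by nlinarith [hsxy, hsapos]
    have hc0 : 0 ≤ c * (sy * sx) := by positivity
    have hupper : sa * (sx - sy) ≤ c * (sy * sx) := by
      apply sqle _ _ hu0 hc0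
      have haux : 0 ≤ (c * (sy * sx)) ^ 2 * (2 * sx * sy + sy ^ 2) := by positivity
      have hpos : (0:ℝ) < (sx + sy) ^ 2 := by positivity
      have hexp : (sa * (sx - sy)) ^ 2 * (sx + sy) ^ 2 = c ^ 2 * sy ^ 2 * (sx ^ 2) ^ 2 := by
        linear_combination hkey2
      have hexp2 : (c * (sy * sx)) ^ 2 * (sx + sy) ^ 2
          = c ^ 2 * sy ^ 2 * (sx ^ 2) ^ 2 + (c * (sy * sx)) ^ 2 * (2 * sx * sy + sy ^ 2) := by
        ring
      have hh : (sa * (sx - sy)) ^ 2 * (sx + sy) ^ 2 ≤ (c * (sy * sx)) ^ 2 * (sx + sy) ^ 2 := by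
        linarith [haux, hexp, hexp2]
      exact le_of_mul_le_mul_right hh hpos
    have hlower : c * (sy * sx) ≤ 2 * (sa * (sx - sy)) := by
      apply sqle _ _ hc0 (by linarith)
      have haux : 0 ≤ (c * (sy * sx)) ^ 2 * ((sx - sy) * (3 * sx + sy)) := by
        apply mul_nonneg (by positivity)
        apply mul_nonneg (by linarith) (by positivity)
      have hpos : (0:ℝ) < (sx + sy) ^ 2 := by positivity
      have hexp : (2 * (sa * (sx - sy))) ^ 2 * (sx + sy) ^ 2
          = 4 * (c ^ 2 * sy ^ 2 * (sx ^ 2) ^ 2) := by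
        linear_combination 4 * hkey2
      have hexp2 : (c * (sy * sx)) ^ 2 * (sx + sy) ^ 2
            + (c * (sy * sx)) ^ 2 * ((sx - sy) * (3 * sx + sy))
          = 4 * (c ^ 2 * sy ^ 2 * (sx ^ 2) ^ 2) := by
        ring
      have hh : (c * (sy * sx)) ^ 2 * (sx + sy) ^ 2 ≤ (2 * (sa * (sx - sy))) ^ 2 * (sx + sy) ^ 2 := by
        linarith [haux, hexp, hexp2]
      exact le_of_mul_le_mul_right hh hpos
    have hceq : Real.sqrt (a / G) / 2 * Real.sqrt (η k) = c / 2 := by rw [hc]; ring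
    constructor
    · rw [hceq, div_sub_div _ _ hsypos.ne' hsxpos.ne', le_div_iff₀ (by positivity)]
      nlinarith [hlower]
    · rw [div_sub_div _ _ hsypos.ne' hsxpos.ne', div_le_iff₀ (by positivity)]
      nlinarith [hupper]
  -- summed bounds
  have hsum : ∀ n,
      1 + Real.sqrt (a / G) / 2 * ∑ k ∈ Finset.range n, Real.sqrt (η k)
        ≤ Real.sqrt (a / A n) ∧
      Real.sqrt (a / A n)
        ≤ 1 + Real.sqrt (a / G) * ∑ k ∈ Finset.range n, Real.sqrt (η k) := by
    intro n
    induction n with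
    | zero =>
      simp [hA0, div_self ha.ne']
    | succ m ih =>
      obtain ⟨ih1, ih2⟩ := ih
      obtain ⟨s1, s2⟩ := step m
      rw [Finset.sum_range_succ]
      constructor
      · rw [mul_add]; linarith
      · rw [mul_add]; linarith
  have hprod : ∀ n, ∏ k ∈ Finset.range n, (1 - θ k) = A n / a := by
    intro n
    induction n with
    | zero => simp [hA0, div_self ha.ne']
    | succ m ih =>
      rw [Finset.prod_range_succ, ih, hA m]
      field_simp
  rw [hprod T]
  obtain ⟨h1, h2⟩ := hsum T
  have hbpos : 0 < Real.sqrt (a / A T) := Real.sqrt_pos.mpr (div_pos ha (hApos T))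
  have hb2 : Real.sqrt (a / A T) ^ 2 = a / A T := Real.sq_sqrt (div_pos ha (hApos T)).le
  have hATa : A T / a = 1 / Real.sqrt (a / A T) ^ 2 := by
    rw [hb2]
    field_simp
  rw [hATa]
  have hspos : 0 ≤ ∑ k ∈ Finset.range T, Real.sqrt (η k) :=
    Finset.sum_nonneg fun k _ => Real.sqrt_nonneg _
  have hgpos : 0 ≤ Real.sqrt (a / G) := Real.sqrt_nonneg _
  set S := ∑ k ∈ Finset.range T, Real.sqrt (η k) with hS
  set b := Real.sqrt (a / A T) with hb
  constructor
  · apply one_div_le_one_div_of_le (by positivity)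
    nlinarith [h2, hbpos]
  · apply one_div_le_one_div_of_le (by positivity)
    nlinarith [h1, hbpos]
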